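/- arXiv:1109.2425 — 7 statements merged into one kernel-verified Lean document; each statement's English description precedes it below -/
import Mathlib

section
/- For every source S = (T, ⪯, Obj, I) and non-term query q ∈ L_T, let t_q be a fresh term not in T, T^q = T ∪ {t_q}, ⪯^q = ⪯ ∪ {(d, t_q) | d a disjunct of q}, and I^q extending I with I^q(t_q) = ∅. Then ans(q, S) = ans(t_q, S^q) where S^q = (T^q, ⪯^q, Obj, I^q). -/
/-- `J` is a model of the (simplified) source with taxonomy `rules` and interpretation `I`:
each rule `({u_1,...,u_r}, t)` satisfies `J(u_1) ∩ ... ∩ J(u_r) ⊆ J(t)`, and `I ≤ J`. -/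
def IsModel {T Obj : Type} (rules : Set (Finset T × T)) (I J : T → Set Obj) : Prop :=
  (∀ r ∈ rules, (⋂ u ∈ r.1, J u) ⊆ J r.2) ∧ ∀ u, I u ⊆ J u

/-- `ans(t, S)`: the objects belonging to `J(t)` for every model `J` of the source. -/
def ans {T Obj : Type} (rules : Set (Finset T × T)) (I : T → Set Obj) (t : T) : Set Obj :=
  {o | ∀ J : T → Set Obj, IsModel rules I J → o ∈ J t}

/-- Extension of a conjunctive query (finite set of terms) under interpretation `J`. -/
def extC {T Obj : Type} (J : T → Set Obj) (d : Finset T) : Set Obj :=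
  ⋂ u ∈ d, J u

/-- Extension of a query (finite set of conjunctive disjuncts) under `J`. -/
def extQ {T Obj : Type} (J : T → Set Obj) (q : Finset (Finset T)) : Set Obj :=
  ⋃ d ∈ q, extC J d

/-- Answer of a query `q` in the source: objects in `q`'s extension under every model. -/
def ansQ {T Obj : Type} (rules : Set (Finset T × T)) (I : T → Set Obj)
    (q : Finset (Finset T)) : Set Obj :=
  {o | ∀ J : T → Set Obj, IsModel rules I J → o ∈ extQ J q}

/-- for a non-term query `q`, adding a fresh term `t_q` (here `none` in
`Option T`), a rule `(d, t_q)` for each disjunct `d` of `q`, and `I^q(t_q) = ∅`, yields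
`ans(q, S) = ans(t_q, S^q)`. -/
theorem ansQ_eq_ans_fresh_term {T Obj : Type} [DecidableEq T] [Finite Obj] [Nonempty Obj]
    (rules : Set (Finset T × T)) (I : T → Set Obj) (q : Finset (Finset T))
    (hq : q.Nonempty) (hd : ∀ d ∈ q, d.Nonempty)
    (hnonterm : ¬ ∃ u : T, q = {({u} : Finset T)}) :
    ansQ rules I q =
      ans (T := Option T)
        (((fun r : Finset T × T => (r.1.image Option.some, Option.some r.2)) '' rules) ∪
          {p : Finset (Option T) × Option T |
            ∃ d ∈ q, p = (d.image Option.some, (none : Option T))})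
        (fun u => u.elim (∅ : Set Obj) I) (none : Option T) := by
  ext o
  have hIm : ∀ (J' : Option T → Set Obj) (d : Finset T),
      (⋂ u ∈ d.image Option.some, J' u) = ⋂ u ∈ d, J' (Option.some u) := by
    intro J' d
    ext x
    simp [Finset.mem_image]
  constructor
  · intro ho J' hJ'
    have hmod : IsModel rules I (fun u => J' (Option.some u)) := by
      constructor
      · intro r hr
        have := hJ'.1 _ (Or.inl ⟨r, hr, rfl⟩)
        simpa [hIm J' r.1] using this
      · intro u
        exact hJ'.2 (Option.some u)
    have := ho _ hmod
    rcases Set.mem_iUnion₂.1 this with ⟨d, hdq, hod⟩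
    have hr := hJ'.1 _ (Or.inr ⟨d, hdq, rfl⟩)
    apply hr
    rw [hIm J' d]
    exact hod
  · intro ho J hJ
    set J' : Option T → Set Obj := fun u => u.elim (extQ J q) J with hJ'def
    have hmod : IsModel (((fun r : Finset T × T => (r.1.image Option.some, Option.some r.2)) '' rules) ∪
          {p : Finset (Option T) × Option T |
            ∃ d ∈ q, p = (d.image Option.some, (none : Option T))})
        (fun u => u.elim (∅ : Set Obj) I) J' := by
      constructor
      · rintro p (⟨r, hr, rfl⟩ | ⟨d, hdq, rfl⟩)
        · have := hJ.1 r hr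
          show (⋂ u ∈ r.1.image Option.some, J' u) ⊆ J' (Option.some r.2)
          rw [hIm J' r.1]
          exact this
        · simp only
          rw [hIm J' d]
          intro x hx
          exact Set.mem_iUnion₂.2 ⟨d, hdq, hx⟩
      · rintro (_ | u)
        · exact Set.empty_subset _
        · exact hJ.2 u
    exact ho J' hmod
end

section
/- For every source S = (T, ⪯, Obj, I), object o ∈ Obj, and term t ∈ T: o ∈ ans(t, S) if and only if the propositional Horn program P_S = C_S ∪ I_S ∪ Q_S is unsatisfiable, where C_S = {t' ← t_1, ..., t_m | (t_1 ∧ ... ∧ t_m, t') ∈ ⪯}, I_S = {u ← | u ∈ ind_S(o)}, and Q_S = {← t}. -/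
/-- `o ∈ ans(t, S)` iff the Horn program `P_S = C_S ∪ I_S ∪ Q_S` is
unsatisfiable, where `C_S` contains a definite clause for each taxonomy rule, `I_S` a fact
`u ←` for each `u ∈ ind_S(o)`, and `Q_S` the goal `← t`. -/
theorem ans_iff_horn_unsat {T Obj : Type} [Finite Obj] [Nonempty Obj]
    (rules : Set (Finset T × T)) (I : T → Set Obj) (t : T) (o : Obj) :
    o ∈ ans rules I t ↔
      ¬ ∃ v : T → Prop,
        (∀ r ∈ rules, (∀ u ∈ r.1, v u) → v r.2) ∧
        (∀ u : T, o ∈ I u → v u) ∧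
        ¬ v t := by
  constructor
  · rintro h ⟨v, hc, hf, hg⟩
    exact hg (h (fun u => {x | x = o → v u})
      ⟨fun r hr x hx => fun hxo => hc r hr (fun u hu => by
          have := Set.mem_iInter₂.mp hx u hu
          exact this hxo),
        fun u x hx hxo => hf u (hxo ▸ hx)⟩ rfl)
  · intro h J hJ
    by_contra hot
    exact h ⟨fun u => o ∈ J u,
      fun r hr hp => hJ.1 r hr (Set.mem_iInter₂.mpr hp),
      fun u hu => hJ.2 u hu, hot⟩
end

section
/- o ∈ ans(t, S) if and only if either o ∈ I(t), or there exists a hyperedge ({u_1, ..., u_r}, t) in the taxonomy B-graph such that o ∈ ans(u_i, S) for all 1 ≤ i ≤ r. -/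
/-- `o ∈ ans(t, S)` iff either `o ∈ I(t)`, or there is a hyperedge
`({u_1,...,u_r}, t)` of the taxonomy B-graph with `o ∈ ans(u_i, S)` for all `i`. -/
theorem ans_unfold {T Obj : Type} [Finite Obj] [Nonempty Obj]
    (rules : Set (Finset T × T)) (I : T → Set Obj) (t : T) (o : Obj) :
    o ∈ ans rules I t ↔
      o ∈ I t ∨ ∃ r ∈ rules, r.2 = t ∧ ∀ u ∈ r.1, o ∈ ans rules I u := by
  constructor
  · intro h
    -- one-step unfolding interpretation
    set J : T → Set Obj := fun u =>
      I u ∪ {o' | ∃ r ∈ rules, r.2 = u ∧ ∀ v ∈ r.1, o' ∈ ans rules I v} with hJ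
    have hJans : ∀ u, J u ⊆ ans rules I u := by
      intro u o' ho'
      rcases ho' with h1 | h1
      · intro K hK; exact hK.2 u h1
      · rcases h1 with ⟨r, hr, hrt, hall⟩
        intro K hK
        have hsub := hK.1 r hr
        subst hrt
        apply hsub
        refine Set.mem_iInter₂.mpr ?_
        intro v hv
        exact hall v hv K hK
    have hmodel : IsModel rules I J := by
      constructor
      · intro r hr o' ho'
        right
        refine ⟨r, hr, rfl, ?_⟩
        intro v hv
        exact hJans v (Set.mem_iInter₂.mp ho' v hv)
      · intro u o' ho'; exact Or.inl ho'
    exact h J hmodel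
  · rintro (h | ⟨r, hr, hrt, hall⟩)
    · intro K hK; exact hK.2 t h
    · intro K hK
      subst hrt
      apply hK.1 r hr
      refine Set.mem_iInter₂.mpr ?_
      intro v hv
      exact hall v hv K hK
end

section
/- For all sources S, terms t, and objects o: o ∈ ans(t, S) if and only if t belongs to the closure cl(ind_S(o)) of ind_S(o) under the taxonomy rules, where cl(A) is the least set B ⊇ A such that whenever ({u_1,...,u_r}, t') ∈ ⪯ and {u_1,...,u_r} ⊆ B, then t' ∈ B. -/
/-- Closure of `A ⊆ T` under the taxonomy rules: the least `B ⊇ A` such that whenever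
`({u_1,...,u_r}, t) ∈ ⪯` and `{u_1,...,u_r} ⊆ B`, then `t ∈ B`. -/
def cl {T : Type} (rules : Set (Finset T × T)) (A : Set T) : Set T :=
  ⋂₀ {B : Set T | A ⊆ B ∧ ∀ r ∈ rules, ↑r.1 ⊆ B → r.2 ∈ B}

lemma cl_mem {T : Type} (rules : Set (Finset T × T)) (A : Set T) :
    cl rules A ∈ {B : Set T | A ⊆ B ∧ ∀ r ∈ rules, ↑r.1 ⊆ B → r.2 ∈ B} := by
  constructor
  · intro a ha B hB
    exact hB.1 ha
  · intro r hr hsub B hB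
    exact hB.2 r hr (fun u hu => hsub hu B hB)

/-- `o ∈ ans(t, S)` iff `t` belongs to the closure of `ind_S(o)` under the
taxonomy rules. -/
theorem ans_iff_mem_closure {T Obj : Type} [Finite Obj] [Nonempty Obj]
    (rules : Set (Finset T × T)) (I : T → Set Obj) (t : T) (o : Obj) :
    o ∈ ans rules I t ↔ t ∈ cl rules {u : T | o ∈ I u} := by
  constructor
  · intro h
    set C := cl rules {u : T | o ∈ I u} with hC
    have hCmem := cl_mem rules {u : T | o ∈ I u}
    have := h (fun u => {o' | o' ≠ o ∨ u ∈ C}) ?_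
    · rcases this with h' | h'
      · exact absurd rfl h'
      · exact h'
    · constructor
      · intro r hr o' ho'
        by_cases heq : o' = o
        · subst heq
          right
          apply hCmem.2 r hr
          intro u hu
          have := Set.mem_iInter₂.mp ho' u hu
          rcases this with h' | h'
          · exact absurd rfl h'
          · exact h'
        · exact Or.inl heq
      · intro u o' ho'
        by_cases heq : o' = o
        · subst heq
          exact Or.inr (hCmem.1 ho')
        · exact Or.inl heq
  · intro ht J hJ
    have : cl rules {u : T | o ∈ I u} ⊆ {u | o ∈ J u} := by
      intro u hu
      apply hu
      constructor
      · intro v hv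
        exact hJ.2 v hv
      · intro r hr hsub
        exact hJ.1 r hr (Set.mem_iInter₂.mpr fun v hv => hsub hv)
    exact this ht
end

section
/- For every query q = d_1 ∨ ... ∨ d_k with disjuncts d_i, ans(q, S) = ans(d_1, S) ∪ ... ∪ ans(d_k, S) provided the least model exists; more precisely, if J* is the least model of S, then ans(q, S) = J*(q), and hence ans distributes over ∨ (union) at the level of queries. -/
/-- Answer of a conjunctive query `d` in the source. -/
def ansC {T Obj : Type} (rules : Set (Finset T × T)) (I : T → Set Obj)
    (d : Finset T) : Set Obj :=
  {o | ∀ J : T → Set Obj, IsModel rules I J → o ∈ extC J d}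

/-- if `J*` is the least model of `S`, then `ans(q, S) = J*(q)`, and hence
`ans` distributes over disjunction: `ans(q, S) = ans(d_1,S) ∪ ... ∪ ans(d_k,S)`. -/
theorem ansQ_eq_least_model_ext {T Obj : Type} [Finite Obj] [Nonempty Obj]
    (rules : Set (Finset T × T)) (I : T → Set Obj) (q : Finset (Finset T))
    (hq : q.Nonempty) (hd : ∀ d ∈ q, d.Nonempty)
    (Jstar : T → Set Obj) (hmodel : IsModel rules I Jstar)
    (hleast : ∀ J : T → Set Obj, IsModel rules I J → ∀ u, Jstar u ⊆ J u) :
    ansQ rules I q = extQ Jstar q ∧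
      ansQ rules I q = ⋃ d ∈ q, ansC rules I d := by
  have hextC : ∀ (J : T → Set Obj), IsModel rules I J → ∀ d, extC Jstar d ⊆ extC J d := by
    intro J hJ d
    apply Set.iInter₂_mono
    intro u _
    exact hleast J hJ u
  have h1 : ansQ rules I q = extQ Jstar q := by
    ext o
    constructor
    · intro h
      exact h Jstar hmodel
    · intro h J hJ
      rcases Set.mem_iUnion₂.mp h with ⟨d, hdq, hod⟩
      exact Set.mem_iUnion₂.mpr ⟨d, hdq, hextC J hJ d hod⟩
  refine ⟨h1, ?_⟩
  have h2 : ∀ d, ansC rules I d = extC Jstar d := by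
    intro d
    ext o
    constructor
    · intro h
      exact h Jstar hmodel
    · intro h J hJ
      exact hextC J hJ d h
  rw [h1]
  unfold extQ
  exact (Set.iUnion₂_congr fun d _ => (h2 d).symm)
end

section
/- In the family of taxonomy B-graphs with hyperedges h_i = ({u_i, v_i}, u_{i+1}) and g_i = ({u_i, v_i}, v_{i+1}) for 1 ≤ i ≤ n−1, together with h_n = ({u_n, v_n}, t), there are exactly 2^{n−1} cycle-free simple paths from u_1 to t, namely one for each choice sequence in {h_i, g_i} for i = 1,...,n−1 followed by h_n. -/
/-- The hyperedges of the family of taxonomy B-graphs of the paper (1-based indices):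
`h_i = ({u_i, v_i}, u_{i+1})` and `g_i = ({u_i, v_i}, v_{i+1})` for `1 ≤ i ≤ n-1`,
together with `h_n = ({u_n, v_n}, t)`. -/
def edges {V : Type} [DecidableEq V] (n : ℕ) (u v : ℕ → V) (t : V) :
    Set (Finset V × V) :=
  {e | (∃ i, 1 ≤ i ∧ i + 1 ≤ n ∧ e = (({u i, v i} : Finset V), u (i + 1))) ∨
       (∃ i, 1 ≤ i ∧ i + 1 ≤ n ∧ e = (({u i, v i} : Finset V), v (i + 1))) ∨
       e = (({u n, v n} : Finset V), t)}

/-- A cycle-free simple path from `s` to `tgt` in the B-graph with hyperedge set `E`,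
given by its (nonempty) list of hyperedges: each hyperedge is in `E`, `s` is in the tail
of the first one, the head of the last one is `tgt`, the head of each hyperedge lies in
the tail of the next, all hyperedges are distinct (simple), and all traversed vertexes
`s, h(E_1), h(E_2), ...` are distinct (cycle-free). -/
def IsCFSimplePath {V : Type} (E : Set (Finset V × V)) (s tgt : V)
    (es : List (Finset V × V)) : Prop :=
  ∃ hne : es ≠ [],
    (∀ e ∈ es, e ∈ E) ∧
    s ∈ (es.head hne).1 ∧
    (es.getLast hne).2 = tgt ∧
    List.Chain' (fun a b => a.2 ∈ b.1) es ∧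
    es.Nodup ∧
    (s :: es.map Prod.snd).Nodup

namespace CFSPaux

variable {V : Type} [DecidableEq V]

/-- The canonical path determined by a list of choices. -/
def mkPath (u v : ℕ → V) (t : V) : ℕ → List Bool → List (Finset V × V)
  | i, [] => [(({u i, v i} : Finset V), t)]
  | i, b :: bs =>
      (({u i, v i} : Finset V), if b then u (i + 1) else v (i + 1)) :: mkPath u v t (i + 1) bs

section

variable {n : ℕ} {u v : ℕ → V} {t : V}
variable (hn : 1 ≤ n)
variable (hu : Set.InjOn u (Set.Icc 1 n)) (hv : Set.InjOn v (Set.Icc 1 n))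
variable (huv : ∀ i ∈ Set.Icc 1 n, ∀ j ∈ Set.Icc 1 n, u i ≠ v j)
variable (hut : ∀ i ∈ Set.Icc 1 n, u i ≠ t) (hvt : ∀ i ∈ Set.Icc 1 n, v i ≠ t)

include hu huv in
lemma u_mem_pair {k j : ℕ} (hk : 1 ≤ k) (hk' : k ≤ n) (hj : 1 ≤ j) (hj' : j ≤ n)
    (h : u k ∈ ({u j, v j} : Finset V)) : k = j := by
  simp only [Finset.mem_insert, Finset.mem_singleton] at h
  rcases h with h | h
  · exact hu ⟨hk, hk'⟩ ⟨hj, hj'⟩ h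
  · exact absurd h (huv k ⟨hk, hk'⟩ j ⟨hj, hj'⟩)

include hv huv in
lemma v_mem_pair {k j : ℕ} (hk : 1 ≤ k) (hk' : k ≤ n) (hj : 1 ≤ j) (hj' : j ≤ n)
    (h : v k ∈ ({u j, v j} : Finset V)) : k = j := by
  simp only [Finset.mem_insert, Finset.mem_singleton] at h
  rcases h with h | h
  · exact absurd h.symm (huv j ⟨hj, hj'⟩ k ⟨hk, hk'⟩)
  · exact hv ⟨hk, hk'⟩ ⟨hj, hj'⟩ h

include hu huv in
lemma pair_eq {i j : ℕ} (hi : 1 ≤ i) (hi' : i ≤ n) (hj : 1 ≤ j) (hj' : j ≤ n)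
    (h : ({u i, v i} : Finset V) = ({u j, v j} : Finset V)) : i = j := by
  have : u i ∈ ({u j, v j} : Finset V) := h ▸ Finset.mem_insert_self _ _
  exact u_mem_pair hu huv hi hi' hj hj' this

include hn hu hv huv hut hvt in
/-- Every cycle-free simple path structure (even without nodup hypotheses) starting
with tail `{u i, v i}` and ending at `t` is a canonical path. -/
lemma key : ∀ (es : List (Finset V × V)) (e : Finset V × V) (i : ℕ), 1 ≤ i → i ≤ n →
    (∀ x ∈ e :: es, x ∈ edges n u v t) → e.1 = ({u i, v i} : Finset V) →
    List.Chain' (fun a b => a.2 ∈ b.1) (e :: es) →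
    ((e :: es).getLast (by simp)).2 = t →
    ∃ bs : List Bool, bs.length + i = n ∧ e :: es = mkPath u v t i bs := by
  intro es
  induction es with
  | nil =>
    intro e i hi hi' hall hfst _ hlast
    simp only [List.getLast_singleton] at hlast
    have he := hall e List.mem_cons_self
    simp only [edges, Set.mem_setOf_eq] at he
    rcases he with ⟨j, hj1, hj2, rfl⟩ | ⟨j, hj1, hj2, rfl⟩ | he
    · exact absurd hlast (hut (j + 1) ⟨by omega, hj2⟩)
    · exact absurd hlast (hvt (j + 1) ⟨by omega, hj2⟩)
    · have hfn : e.1 = ({u n, v n} : Finset V) := by rw [he]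
      have hin : i = n := pair_eq hu huv hi hi' hn le_rfl (hfst ▸ hfn ▸ rfl)
      subst hin
      refine ⟨[], by simp, ?_⟩
      rw [he]; rfl
  | cons e' es' ih =>
    intro e i hi hi' hall hfst hch hlast
    simp only [List.Chain', List.isChain_cons_cons] at hch
    obtain ⟨hrel, hch'⟩ := hch
    have he' := hall e' (by simp)
    have hk : ∃ k, 1 ≤ k ∧ k ≤ n ∧ e'.1 = ({u k, v k} : Finset V) := by
      simp only [edges, Set.mem_setOf_eq] at he'
      rcases he' with ⟨j, hj1, hj2, rfl⟩ | ⟨j, hj1, hj2, rfl⟩ | he'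
      · exact ⟨j, hj1, by omega, rfl⟩
      · exact ⟨j, hj1, by omega, rfl⟩
      · exact ⟨n, hn, le_rfl, by rw [he']⟩
    obtain ⟨k, hk1, hk2, hke⟩ := hk
    have he := hall e List.mem_cons_self
    simp only [edges, Set.mem_setOf_eq] at he
    have hlast' : ((e' :: es').getLast (by simp)).2 = t := by
      rwa [List.getLast_cons (by simp)] at hlast
    rcases he with ⟨j, hj1, hj2, rfl⟩ | ⟨j, hj1, hj2, rfl⟩ | he
    · -- e = ({u j, v j}, u (j+1))
      have hij : i = j := pair_eq hu huv hi hi' hj1 (by omega) hfst.symm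
      subst hij
      have hmem : u (i + 1) ∈ ({u k, v k} : Finset V) := hke ▸ hrel
      have hk' : i + 1 = k := u_mem_pair hu huv (by omega) hj2 hk1 hk2 hmem
      obtain ⟨bs, hbl, hbe⟩ := ih e' (i + 1) (by omega) hj2
        (fun x hx => hall x (List.mem_cons_of_mem _ hx)) (hk' ▸ hke) hch' hlast'
      refine ⟨true :: bs, by simp only [List.length_cons]; omega, ?_⟩
      simp only [mkPath, if_true]
      rw [← hbe]
    · -- e = ({u j, v j}, v (j+1))
      have hij : i = j := pair_eq hu huv hi hi' hj1 (by omega) hfst.symm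
      subst hij
      have hmem : v (i + 1) ∈ ({u k, v k} : Finset V) := hke ▸ hrel
      have hk' : i + 1 = k := v_mem_pair hv huv (by omega) hj2 hk1 hk2 hmem
      obtain ⟨bs, hbl, hbe⟩ := ih e' (i + 1) (by omega) hj2
        (fun x hx => hall x (List.mem_cons_of_mem _ hx)) (hk' ▸ hke) hch' hlast'
      refine ⟨false :: bs, by simp only [List.length_cons]; omega, ?_⟩
      simp only [mkPath, if_false, Bool.false_eq_true]
      rw [← hbe]
    · -- e = ({u n, v n}, t) : impossible, t is in no tail
      have : e.2 = t := by rw [he]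
      rw [this, hke] at hrel
      simp only [Finset.mem_insert, Finset.mem_singleton] at hrel
      rcases hrel with h | h
      · exact absurd h.symm (hut k ⟨hk1, hk2⟩)
      · exact absurd h.symm (hvt k ⟨hk1, hk2⟩)

lemma mk_ne_nil (i : ℕ) (bs : List Bool) : mkPath u v t i bs ≠ [] := by
  cases bs <;> simp [mkPath]

lemma mk_head_fst (i : ℕ) (bs : List Bool) :
    ((mkPath u v t i bs).head (mk_ne_nil i bs)).1 = ({u i, v i} : Finset V) := by
  cases bs <;> simp [mkPath]

lemma mk_last (bs : List Bool) : ∀ (i : ℕ),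
    ((mkPath u v t i bs).getLast (mk_ne_nil i bs)).2 = t := by
  induction bs with
  | nil => intro i; rfl
  | cons b bs ih =>
    intro i
    have h2 : (mkPath u v t i (b :: bs)).getLast (mk_ne_nil i (b :: bs)) =
        (mkPath u v t (i + 1) bs).getLast (mk_ne_nil (i + 1) bs) :=
      List.getLast_cons (mk_ne_nil (i + 1) bs)
    rw [h2]; exact ih (i + 1)

include hn in
lemma mk_mem_edges (bs : List Bool) : ∀ (i : ℕ), 1 ≤ i → bs.length + i = n →
    ∀ x ∈ mkPath u v t i bs, x ∈ edges n u v t := by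
  induction bs with
  | nil =>
    intro i hi hlen x hx
    simp only [mkPath, List.mem_singleton] at hx
    have : i = n := by simpa using hlen
    subst this
    simp only [edges, Set.mem_setOf_eq]
    exact Or.inr (Or.inr hx)
  | cons b bs ih =>
    intro i hi hlen x hx
    simp only [List.length_cons] at hlen
    simp only [mkPath, List.mem_cons] at hx
    rcases hx with rfl | hx
    · simp only [edges, Set.mem_setOf_eq]
      cases b
      · exact Or.inr (Or.inl ⟨i, hi, by omega, by simp⟩)
      · exact Or.inl ⟨i, hi, by omega, by simp⟩
    · exact ih (i + 1) (by omega) (by omega) x hx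

lemma mk_chain (bs : List Bool) : ∀ (i : ℕ),
    List.Chain' (fun a b => a.2 ∈ b.1) (mkPath u v t i bs) := by
  induction bs with
  | nil => intro i; exact List.isChain_singleton _
  | cons b bs ih =>
    intro i
    have h2 : mkPath u v t i (b :: bs) =
        (({u i, v i} : Finset V), if b then u (i + 1) else v (i + 1)) ::
          mkPath u v t (i + 1) bs := rfl
    rw [h2]; simp only [List.Chain']; rw [List.isChain_cons]
    refine ⟨?_, ih (i + 1)⟩
    intro y hy
    have hy' : y = (mkPath u v t (i + 1) bs).head (mk_ne_nil _ _) := by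
      rwa [List.head?_eq_head, Option.mem_some_iff, eq_comm] at hy
    subst hy'
    rw [mk_head_fst]
    cases b <;> simp

lemma mk_snd_mem (bs : List Bool) : ∀ (i : ℕ),
    ∀ x ∈ (mkPath u v t i bs).map Prod.snd,
      x = t ∨ ∃ j, i + 1 ≤ j ∧ j ≤ i + bs.length ∧ (x = u j ∨ x = v j) := by
  induction bs with
  | nil =>
    intro i x hx
    simp only [mkPath, List.map_cons, List.map_nil, List.mem_singleton] at hx
    exact Or.inl hx
  | cons b bs ih =>
    intro i x hx
    simp only [mkPath, List.map_cons, List.mem_cons] at hx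
    rcases hx with rfl | hx
    · refine Or.inr ⟨i + 1, le_rfl, by simp, ?_⟩
      cases b <;> simp
    · rcases ih (i + 1) x hx with h | ⟨j, hj1, hj2, hj3⟩
      · exact Or.inl h
      · exact Or.inr ⟨j, by omega, by simp only [List.length_cons]; omega, hj3⟩

include hn hu huv hut in
lemma mk_u_not_mem (bs : List Bool) (i k : ℕ) (hk1 : 1 ≤ k) (hk2 : k ≤ i)
    (hlen : bs.length + i = n) : u k ∉ (mkPath u v t i bs).map Prod.snd := by
  intro hmem
  rcases mk_snd_mem bs i _ hmem with h | ⟨j, hj1, hj2, hj3⟩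
  · exact hut k ⟨hk1, by omega⟩ h
  · rcases hj3 with h | h
    · have : k = j := hu ⟨hk1, by omega⟩ ⟨by omega, by omega⟩ h
      omega
    · exact huv k ⟨hk1, by omega⟩ j ⟨by omega, by omega⟩ h

include hn hv huv hvt in
lemma mk_v_not_mem (bs : List Bool) (i k : ℕ) (hk1 : 1 ≤ k) (hk2 : k ≤ i)
    (hlen : bs.length + i = n) : v k ∉ (mkPath u v t i bs).map Prod.snd := by
  intro hmem
  rcases mk_snd_mem bs i _ hmem with h | ⟨j, hj1, hj2, hj3⟩
  · exact hvt k ⟨hk1, by omega⟩ h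
  · rcases hj3 with h | h
    · exact huv j ⟨by omega, by omega⟩ k ⟨hk1, by omega⟩ h.symm
    · have : k = j := hv ⟨hk1, by omega⟩ ⟨by omega, by omega⟩ h
      omega

include hn hu hv huv hut hvt in
lemma mk_snd_nodup (bs : List Bool) : ∀ (i : ℕ), 1 ≤ i → bs.length + i = n →
    ((mkPath u v t i bs).map Prod.snd).Nodup := by
  induction bs with
  | nil => intro i hi hlen; simp [mkPath]
  | cons b bs ih =>
    intro i hi hlen
    simp only [List.length_cons] at hlen
    have hlen' : bs.length + (i + 1) = n := by omega
    have h2 : mkPath u v t i (b :: bs) =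
        (({u i, v i} : Finset V), if b then u (i + 1) else v (i + 1)) ::
          mkPath u v t (i + 1) bs := rfl
    rw [h2, List.map_cons, List.nodup_cons]
    refine ⟨?_, ih (i + 1) (by omega) hlen'⟩
    cases b
    · simpa using mk_v_not_mem hn hv huv hvt bs (i + 1) (i + 1) (by omega) le_rfl hlen'
    · simpa using mk_u_not_mem hn hu huv hut bs (i + 1) (i + 1) (by omega) le_rfl hlen'

lemma mk_fst_mem (bs : List Bool) : ∀ (i : ℕ), ∀ x ∈ mkPath u v t i bs,
    ∃ j, i ≤ j ∧ j ≤ i + bs.length ∧ x.1 = ({u j, v j} : Finset V) := by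
  induction bs with
  | nil =>
    intro i x hx
    simp only [mkPath, List.mem_singleton] at hx
    exact ⟨i, le_rfl, by simp, by rw [hx]⟩
  | cons b bs ih =>
    intro i x hx
    simp only [mkPath, List.mem_cons] at hx
    rcases hx with rfl | hx
    · exact ⟨i, le_rfl, by simp, rfl⟩
    · obtain ⟨j, hj1, hj2, hj3⟩ := ih (i + 1) x hx
      exact ⟨j, by omega, by simp only [List.length_cons]; omega, hj3⟩

include hn hu huv in
lemma mk_nodup (bs : List Bool) : ∀ (i : ℕ), 1 ≤ i → bs.length + i = n →
    (mkPath u v t i bs).Nodup := by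
  induction bs with
  | nil => intro i hi hlen; simp [mkPath]
  | cons b bs ih =>
    intro i hi hlen
    simp only [List.length_cons] at hlen
    have hlen' : bs.length + (i + 1) = n := by omega
    have h2 : mkPath u v t i (b :: bs) =
        (({u i, v i} : Finset V), if b then u (i + 1) else v (i + 1)) ::
          mkPath u v t (i + 1) bs := rfl
    rw [h2, List.nodup_cons]
    refine ⟨?_, ih (i + 1) (by omega) hlen'⟩
    intro hmem
    obtain ⟨j, hj1, hj2, hj3⟩ := mk_fst_mem bs (i + 1) _ hmem
    have : i = j := pair_eq hu huv hi (by omega) (by omega) (by omega) hj3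
    omega

include huv in
lemma mk_inj (bs : List Bool) : ∀ (cs : List Bool) (i : ℕ), 1 ≤ i → bs.length + i = n →
    cs.length + i = n → mkPath u v t i bs = mkPath u v t i cs → bs = cs := by
  induction bs with
  | nil =>
    intro cs i hi h1 h2 heq
    cases cs with
    | nil => rfl
    | cons c cs => simp only [List.length_nil, List.length_cons] at h1 h2; omega
  | cons b bs ih =>
    intro cs i hi h1 h2 heq
    cases cs with
    | nil => simp only [List.length_nil, List.length_cons] at h1 h2; omega
    | cons c cs =>
      simp only [mkPath, List.cons.injEq, Prod.mk.injEq] at heq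
      obtain ⟨⟨-, hsnd⟩, htail⟩ := heq
      simp only [List.length_cons] at h1 h2
      have hbn : i + 1 ≤ n := by omega
      have hbc : b = c := by
        cases b <;> cases c <;> simp at hsnd ⊢
        · exact huv (i + 1) ⟨by omega, hbn⟩ (i + 1) ⟨by omega, hbn⟩ hsnd.symm
        · exact huv (i + 1) ⟨by omega, hbn⟩ (i + 1) ⟨by omega, hbn⟩ hsnd
      subst hbc
      rw [ih cs (i + 1) (by omega) (by omega) (by omega) htail]

end

end CFSPaux

/-- in the family of B-graphs above, with all `2n + 1` vertexes
`u_1, ..., u_n, v_1, ..., v_n, t` distinct and `n ≥ 1`, there are exactly `2^(n-1)`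
cycle-free simple paths from `u_1` to `t`. -/
theorem count_cycle_free_simple_paths {V : Type} [DecidableEq V]
    (n : ℕ) (hn : 1 ≤ n) (u v : ℕ → V) (t : V)
    (hu : Set.InjOn u (Set.Icc 1 n)) (hv : Set.InjOn v (Set.Icc 1 n))
    (huv : ∀ i ∈ Set.Icc 1 n, ∀ j ∈ Set.Icc 1 n, u i ≠ v j)
    (hut : ∀ i ∈ Set.Icc 1 n, u i ≠ t) (hvt : ∀ i ∈ Set.Icc 1 n, v i ≠ t) :
    {es : List (Finset V × V) | IsCFSimplePath (edges n u v t) (u 1) t es}.ncard =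
      2 ^ (n - 1) := by
  classical
  open CFSPaux in
  have hset : {es : List (Finset V × V) | IsCFSimplePath (edges n u v t) (u 1) t es}
      = Set.range (fun f : Fin (n - 1) → Bool => mkPath u v t 1 (List.ofFn f)) := by
    ext es
    simp only [Set.mem_setOf_eq, Set.mem_range]
    constructor
    · rintro ⟨hne, hall, hhead, hlast, hch, -, -⟩
      cases es with
      | nil => exact absurd rfl hne
      | cons e es' =>
        simp only [List.head_cons] at hhead
        have he := hall e List.mem_cons_self
        have hfst : e.1 = ({u 1, v 1} : Finset V) := by
          simp only [edges, Set.mem_setOf_eq] at he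
          rcases he with ⟨j, hj1, hj2, rfl⟩ | ⟨j, hj1, hj2, rfl⟩ | he
          · have h1 : (1 : ℕ) = j := u_mem_pair hu huv le_rfl hn hj1 (by omega) hhead
            rw [← h1]
          · have h1 : (1 : ℕ) = j := u_mem_pair hu huv le_rfl hn hj1 (by omega) hhead
            rw [← h1]
          · have hfn : e.1 = ({u n, v n} : Finset V) := by rw [he]
            have h1 : (1 : ℕ) = n := u_mem_pair hu huv le_rfl hn hn le_rfl (hfn ▸ hhead)
            rw [hfn, ← h1]
        obtain ⟨bs, hbl, hbe⟩ := key hn hu hv huv hut hvt es' e 1 le_rfl hn hall hfst hch hlast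
        have hlen : bs.length = n - 1 := by omega
        refine ⟨fun k => bs.get ⟨k, by omega⟩, ?_⟩
        have hofn : List.ofFn (fun k : Fin (n - 1) => bs.get ⟨k, by omega⟩) = bs := by
          apply List.ext_getElem
          · simp [hlen]
          · intro k h1 h2
            simp [List.getElem_ofFn]
        rw [hofn, ← hbe]
    · rintro ⟨f, rfl⟩
      have hlen : (List.ofFn f).length + 1 = n := by
        simp only [List.length_ofFn]; omega
      refine ⟨mk_ne_nil 1 _, mk_mem_edges hn _ 1 le_rfl hlen, ?_, mk_last _ 1,
        mk_chain _ 1, mk_nodup hn hu huv _ 1 le_rfl hlen, ?_⟩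
      · rw [mk_head_fst]; simp
      · rw [List.nodup_cons]
        exact ⟨mk_u_not_mem hn hu huv hut _ 1 1 le_rfl le_rfl hlen,
          mk_snd_nodup hn hu hv huv hut hvt _ 1 le_rfl hlen⟩
  rw [hset]
  have hinj : Function.Injective (fun f : Fin (n - 1) → Bool => mkPath u v t 1 (List.ofFn f)) := by
    intro f g h
    have hl : (List.ofFn f).length + 1 = n := by simp only [List.length_ofFn]; omega
    have hl' : (List.ofFn g).length + 1 = n := by simp only [List.length_ofFn]; omega
    exact List.ofFn_injective (CFSPaux.mk_inj huv _ _ 1 le_rfl hl hl' h)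
  rw [← Nat.card_coe_set_eq, Nat.card_range_of_injective hinj, Nat.card_eq_fintype_card]
  simp
end

section
/- For a network of articulated sources N = {S_1, ..., S_n} with pairwise disjoint terminologies, and a term t belonging to terminology T_{S_i} of a source S_i that has no articulations and such that no other source's taxonomy or articulations mention terms of T_{S_i} in rule heads with tails outside T_{S_i}—i.e., t's closure computation stays within S_i—the network answer equals the local answer: ans(t, S_N) = ans(t, (T_{S_i}, ⪯_{S_i}, Obj, I_{S_i})), provided every rule of ⊑_N whose head lies in T_{S_i} is a rule of ⪯_{S_i}. -/
/-- in a network of articulated sources with pairwise disjoint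
terminologies, if a term `t` belongs to the terminology of a source `S_{i₀}` that has no
articulations, the local taxonomy of `S_{i₀}` only involves its own terminology, every
rule of the network taxonomy `⊑_N` whose head lies in `T_{S_{i₀}}` is a rule of
`⪯_{S_{i₀}}`, and the local interpretation agrees with the network interpretation on
`T_{S_{i₀}}` (and is empty outside), then the network answer equals the local answer. -/
theorem network_ans_eq_local_ans {T Obj : Type} {ι : Type} [Finite Obj] [Nonempty Obj]
    (Tset : ι → Set T)
    (hdisj : ∀ i j : ι, i ≠ j → Disjoint (Tset i) (Tset j))
    (rules artic : ι → Set (Finset T × T))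
    (Inet Iloc : T → Set Obj) (i₀ : ι) (t : T)
    (ht : t ∈ Tset i₀)
    (hnoartic : artic i₀ = ∅)
    (hlocal : ∀ r ∈ rules i₀, ↑r.1 ⊆ Tset i₀ ∧ r.2 ∈ Tset i₀)
    (hheads : ∀ r ∈ (⋃ i : ι, rules i ∪ artic i), r.2 ∈ Tset i₀ → r ∈ rules i₀)
    (hIloc : ∀ u ∈ Tset i₀, Iloc u = Inet u)
    (hIloc' : ∀ u : T, u ∉ Tset i₀ → Iloc u = ∅) :
    ans (⋃ i : ι, rules i ∪ artic i) Inet t = ans (rules i₀) Iloc t := by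
  classical
  apply Set.Subset.antisymm
  · -- network ans ⊆ local ans: extend a local model to a network model
    intro o ho J hJ
    set J' : T → Set Obj := fun u => if u ∈ Tset i₀ then J u else Set.univ with hJ'
    have hmod : IsModel (⋃ i : ι, rules i ∪ artic i) Inet J' := by
      constructor
      · intro r hr
        by_cases hhead : r.2 ∈ Tset i₀
        · have hri : r ∈ rules i₀ := hheads r hr hhead
          obtain ⟨htail, _⟩ := hlocal r hri
          have : (⋂ u ∈ r.1, J' u) ⊆ ⋂ u ∈ r.1, J u := by
            refine Set.iInter₂_mono fun u hu => ?_
            simp [hJ', htail hu]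
          refine this.trans ?_
          have := hJ.1 r hri
          simpa [hJ', hhead] using this
        · simp [hJ', hhead]
      · intro u
        by_cases hu : u ∈ Tset i₀
        · simp only [hJ', hu, if_true]
          rw [← hIloc u hu]; exact hJ.2 u
        · simp [hJ', hu]
    have := ho J' hmod
    simpa [hJ', ht] using this
  · -- local ans ⊆ network ans: a network model is a local model
    intro o ho J hJ
    refine ho J ⟨fun r hr => hJ.1 r ?_, fun u => ?_⟩
    · exact Set.mem_iUnion.2 ⟨i₀, Or.inl hr⟩
    · by_cases hu : u ∈ Tset i₀
      · rw [hIloc u hu]; exact hJ.2 u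
      · simp [hIloc' u hu]
end
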